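/- arXiv:2009.13569 — 6 statements merged into one kernel-verified Lean document; each statement's English description precedes it below -/
import Mathlib

section
/- Let n and t be positive integers with t dividing n, and let T[l,r) be a parallel task, i.e., integers with 0 ≤ l < r ≤ n and ⌊r·t/n⌋ − ⌊l·t/n⌋ > 1. Then for every integer i with 0 ≤ i < t, the task T[l,r) covers position (i+1)·(n/t) − 1 (that is, l ≤ (i+1)·(n/t) − 1 < r) if and only if thread i executes T[l,r) (that is, ⌊l·t/n⌋ ≤ i < ⌊r·t/n⌋). -/
/-- A parallel task `T[l,r)` covers position `(i+1)·(n/t) − 1` iff thread `i`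
executes it, i.e., `⌊l·t/n⌋ ≤ i < ⌊r·t/n⌋`. -/
theorem stmt_1 (n t : ℕ) (hn : 0 < n) (ht : 0 < t) (hdvd : t ∣ n)
    (l r : ℕ) (hlr : l < r) (hrn : r ≤ n)
    (hpar : r * t / n - l * t / n > 1)
    (i : ℕ) (hi : i < t) :
    (l ≤ (i + 1) * (n / t) - 1 ∧ (i + 1) * (n / t) - 1 < r) ↔
      (l * t / n ≤ i ∧ i < r * t / n) := by
  obtain ⟨c, rfl⟩ := hdvd
  have hc : 0 < c := Nat.pos_of_mul_pos_left hn
  have h1 : t * c / t = c := Nat.mul_div_cancel_left _ ht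
  have h2 : ∀ m : ℕ, m * t / (t * c) = m / c := fun m => by
    rw [mul_comm m t, Nat.mul_div_mul_left _ _ ht]
  rw [h1, h2, h2]
  have hpos : 1 ≤ (i + 1) * c := Nat.one_le_iff_ne_zero.mpr (by positivity)
  have e1 : l / c ≤ i ↔ l < (i + 1) * c := by
    rw [← Nat.lt_succ_iff, Nat.div_lt_iff_lt_mul hc]
  have e2 : i < r / c ↔ (i + 1) * c ≤ r := by
    rw [← Nat.succ_le_iff, Nat.le_div_iff_mul_le hc]
  omega
end

section
/- Let n and t be positive integers with t dividing n, and let T[l₁,r₁) and T[l₂,r₂) be parallel tasks (0 ≤ l₁ < r₁ ≤ n, 0 ≤ l₂ < r₂ ≤ n, ⌊r₁·t/n⌋ − ⌊l₁·t/n⌋ > 1, ⌊r₂·t/n⌋ − ⌊l₂·t/n⌋ > 1) whose index ranges are disjoint, i.e., [l₁,r₁) ∩ [l₂,r₂) = ∅. Then no thread belongs to both thread groups: there is no integer i with ⌊l₁·t/n⌋ ≤ i < ⌊r₁·t/n⌋ and ⌊l₂·t/n⌋ ≤ i < ⌊r₂·t/n⌋. Consequently, since the tasks of one recursion level are pairwise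 disjoint, each thread works on at most one parallel task per recursion level. -/
/-- Two parallel tasks with disjoint index ranges have disjoint thread groups:
no thread executes both. -/
theorem stmt_4 (n t : ℕ) (hn : 0 < n) (ht : 0 < t) (hdvd : t ∣ n)
    (l₁ r₁ l₂ r₂ : ℕ)
    (h₁ : l₁ < r₁) (h₁n : r₁ ≤ n) (hpar₁ : r₁ * t / n - l₁ * t / n > 1)
    (h₂ : l₂ < r₂) (h₂n : r₂ ≤ n) (hpar₂ : r₂ * t / n - l₂ * t / n > 1)
    (hdisj : Set.Ico l₁ r₁ ∩ Set.Ico l₂ r₂ = ∅) :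
    ¬ ∃ i : ℕ, (l₁ * t / n ≤ i ∧ i < r₁ * t / n) ∧
        (l₂ * t / n ≤ i ∧ i < r₂ * t / n) := by
  rintro ⟨i, ⟨hi1, hi2⟩, hi3, hi4⟩
  have hsep : r₁ ≤ l₂ ∨ r₂ ≤ l₁ := by
    by_contra h
    push_neg at h
    have : max l₁ l₂ ∈ Set.Ico l₁ r₁ ∩ Set.Ico l₂ r₂ := by
      simp only [Set.mem_inter_iff, Set.mem_Ico]
      omega
    rw [hdisj] at this
    exact this
  rcases hsep with h | h
  · have : r₁ * t / n ≤ l₂ * t / n :=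
      Nat.div_le_div_right (Nat.mul_le_mul_right t h)
    omega
  · have : r₂ * t / n ≤ l₁ * t / n :=
      Nat.div_le_div_right (Nat.mul_le_mul_right t h)
    omega
end

section
/- Let α and k be positive integers with k ≥ 2, and let X be a binomially distributed random variable with α·k independent trials each succeeding with probability 3/(2k). Then Pr[X < α] ≤ exp(−α/12). -/
/-- `3/2 ≤ exp(5/12)`, proved by comparing 12th powers with `exp 1 > 2.7182818283`. -/
lemma aux_32_le_exp : (3/2 : ℝ) ≤ Real.exp (5/12) := by
  by_contra h
  push_neg at h
  have h0 : (0:ℝ) ≤ Real.exp (5/12) := (Real.exp_pos _).le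
  have h12 : Real.exp (5/12) ^ 12 ≤ (3/2 : ℝ) ^ 12 := pow_le_pow_left₀ h0 h.le 12
  have he : Real.exp (5/12) ^ 12 = Real.exp 5 := by
    rw [← Real.exp_nat_mul]; norm_num
  have he5 : Real.exp 5 = Real.exp 1 ^ 5 := by
    rw [← Real.exp_nat_mul]; norm_num
  have h1 : (2.7182818283 : ℝ) < Real.exp 1 := Real.exp_one_gt_d9
  have h5 : (2.7182818283 : ℝ) ^ 5 < Real.exp 1 ^ 5 := by
    apply pow_lt_pow_left₀ h1 (by norm_num)
    norm_num
  rw [he, he5] at h12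
  nlinarith [h12, h5]

/-- Chernoff bound: a binomial random variable with `α·k` trials and success
probability `3/(2k)` falls below `α` with probability at most `exp(−α/12)`. -/
theorem stmt_7 (α k : ℕ) (hα : 0 < α) (hk : 2 ≤ k) :
    ∑ j ∈ Finset.range α,
        ((α * k).choose j : ℝ) * (3 / (2 * (k : ℝ))) ^ j *
          (1 - 3 / (2 * (k : ℝ))) ^ (α * k - j)
      ≤ Real.exp (-(α : ℝ) / 12) := by
  have hkR : (2:ℝ) ≤ (k:ℝ) := by exact_mod_cast hk
  have hk0 : (0:ℝ) < (k:ℝ) := by linarith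
  set p : ℝ := 3 / (2 * (k:ℝ)) with hp
  have hp0 : 0 ≤ p := by positivity
  have hp34 : p ≤ 3/4 := by
    rw [hp, div_le_div_iff₀ (by linarith) (by norm_num)]
    linarith
  have hq0 : (0:ℝ) ≤ 1 - p := by linarith
  have h13 : (0:ℝ) ≤ 1 - p/3 := by linarith
  set N := α * k with hN
  have hαN : α ≤ N := Nat.le_mul_of_pos_right α (by omega)
  -- Step 1+2: bound the sum by (3/2)^α * (1 - p/3)^N
  have step12 : ∑ j ∈ Finset.range α, (N.choose j : ℝ) * p ^ j * (1-p) ^ (N-j)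
      ≤ (3/2:ℝ)^α * (1 - p/3)^N := by
    have hterm : ∀ j ∈ Finset.range α,
        (N.choose j : ℝ) * p ^ j * (1-p) ^ (N-j)
        ≤ (3/2:ℝ)^α * ((2*p/3) ^ j * (1-p) ^ (N-j) * (N.choose j : ℝ)) := by
      intro j hj
      have hjα : j ≤ α := (Finset.mem_range.mp hj).le
      have h1 : ((3:ℝ)/2) ^ j ≤ (3/2:ℝ) ^ α := pow_le_pow_right₀ (by norm_num) hjα
      have hkey : (1:ℝ) ≤ (3/2:ℝ)^α * (2/3:ℝ)^j := by
        have h23 : ((2:ℝ)/3) = ((3:ℝ)/2)⁻¹ := by norm_num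
        rw [h23, inv_pow, ← div_eq_mul_inv, le_div_iff₀ (by positivity), one_mul]
        exact h1
      have h2 : (2*p/3:ℝ) ^ j = (2/3:ℝ)^j * p ^ j := by
        rw [← mul_pow]; ring_nf
      rw [h2]
      have hnn : (0:ℝ) ≤ (N.choose j : ℝ) * p ^ j * (1-p) ^ (N-j) := by positivity
      calc (N.choose j : ℝ) * p ^ j * (1-p) ^ (N-j)
          = 1 * ((N.choose j : ℝ) * p ^ j * (1-p) ^ (N-j)) := by ring
        _ ≤ ((3/2:ℝ)^α * (2/3:ℝ)^j) * ((N.choose j : ℝ) * p ^ j * (1-p) ^ (N-j)) :=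
            mul_le_mul_of_nonneg_right hkey hnn
        _ = (3/2:ℝ)^α * ((2/3:ℝ)^j * p ^ j * (1-p) ^ (N-j) * (N.choose j : ℝ)) := by ring
    calc ∑ j ∈ Finset.range α, (N.choose j : ℝ) * p ^ j * (1-p) ^ (N-j)
        ≤ ∑ j ∈ Finset.range α, (3/2:ℝ)^α * ((2*p/3) ^ j * (1-p) ^ (N-j) * (N.choose j : ℝ)) :=
          Finset.sum_le_sum hterm
      _ ≤ ∑ j ∈ Finset.range (N+1), (3/2:ℝ)^α * ((2*p/3) ^ j * (1-p) ^ (N-j) * (N.choose j : ℝ)) := by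
          apply Finset.sum_le_sum_of_subset_of_nonneg
          · exact Finset.range_subset_range.mpr (by omega)
          · intro j _ _; positivity
      _ = (3/2:ℝ)^α * ∑ j ∈ Finset.range (N+1), (2*p/3) ^ j * (1-p) ^ (N-j) * (N.choose j : ℝ) := by
          rw [Finset.mul_sum]
      _ = (3/2:ℝ)^α * (2*p/3 + (1-p))^N := by rw [add_pow]
      _ = (3/2:ℝ)^α * (1 - p/3)^N := by ring_nf
  -- Step 3: (1 - p/3)^N ≤ exp(-α/2)
  have step3 : (1 - p/3:ℝ)^N ≤ Real.exp (-(α:ℝ)/2) := by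
    have h1 : (1 - p/3:ℝ) ≤ Real.exp (-(p/3)) := by
      have := Real.add_one_le_exp (-(p/3))
      linarith
    calc (1 - p/3:ℝ)^N ≤ Real.exp (-(p/3)) ^ N := pow_le_pow_left₀ h13 h1 N
      _ = Real.exp ((N:ℝ) * (-(p/3))) := (Real.exp_nat_mul _ N).symm
      _ = Real.exp (-(α:ℝ)/2) := by
          congr 1
          rw [hp, hN]
          push_cast
          field_simp
  -- Step 4: (3/2)^α * exp(-α/2) ≤ exp(-α/12)
  have step4 : (3/2:ℝ)^α * Real.exp (-(α:ℝ)/2) ≤ Real.exp (-(α:ℝ)/12) := by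
    have h1 : (3/2:ℝ)^α ≤ Real.exp (5/12) ^ α :=
      pow_le_pow_left₀ (by norm_num) aux_32_le_exp α
    have h2 : Real.exp (5/12) ^ α = Real.exp ((α:ℝ) * (5/12)) := (Real.exp_nat_mul _ α).symm
    have h3 : Real.exp ((α:ℝ) * (5/12)) * Real.exp (-(α:ℝ)/2) = Real.exp (-(α:ℝ)/12) := by
      rw [← Real.exp_add]; congr 1; ring
    calc (3/2:ℝ)^α * Real.exp (-(α:ℝ)/2)
        ≤ Real.exp ((α:ℝ) * (5/12)) * Real.exp (-(α:ℝ)/2) := by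
          rw [← h2]; exact mul_le_mul_of_nonneg_right h1 (Real.exp_pos _).le
      _ = Real.exp (-(α:ℝ)/12) := h3
  calc ∑ j ∈ Finset.range α, (N.choose j : ℝ) * p ^ j * (1-p) ^ (N-j)
      ≤ (3/2:ℝ)^α * (1 - p/3)^N := step12
    _ ≤ (3/2:ℝ)^α * Real.exp (-(α:ℝ)/2) := by
        exact mul_le_mul_of_nonneg_left step3 (by positivity)
    _ ≤ Real.exp (-(α:ℝ)/12) := step4
end

section
/- Let k ≥ 4 be an integer, let c be a real number with c ≥ 36 − 2.38/log₂(0.34·k), let L ≥ 1 be an integer, and let p ∈ [0,1] with p ≤ 2·k^{−c/12}. Let X be a binomially distributed random variable with 2L independent trials each failing with probability p (X counts the non-successful recursion steps). Then Pr[X > L] ≤ (k/3)^{−2L}; equivalently, with probability at least 1 − (k/3)^{−2L}, at least L of the 2L recursion steps are successful. -/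
/-- Recursion-depth bound: failing with probability `p ≤ 2·k^{−c/12}` in each of
`2L` trials, more than `L` failures occur with probability at most `(k/3)^{−2L}`. -/
theorem stmt_9 (k : ℕ) (hk : 4 ≤ k) (c : ℝ)
    (hc : 36 - 2.38 / Real.logb 2 (0.34 * k) ≤ c)
    (L : ℕ) (hL : 1 ≤ L) (p : ℝ) (hp0 : 0 ≤ p) (hp1 : p ≤ 1)
    (hp : p ≤ 2 * (k : ℝ) ^ (-(c / 12))) :
    ∑ j ∈ Finset.Icc (L + 1) (2 * L),
        ((2 * L).choose j : ℝ) * p ^ j * (1 - p) ^ (2 * L - j)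
      ≤ ((k : ℝ) / 3) ^ (-(2 * (L : ℝ))) := by
  have hk4 : (4:ℝ) ≤ (k:ℝ) := by exact_mod_cast hk
  have hk1 : (1:ℝ) ≤ (k:ℝ) := by linarith
  have hkpos : (0:ℝ) < (k:ℝ) := by linarith
  -- Step 1: c ≥ 24
  have hlb : (2.38/12 : ℝ) ≤ Real.logb 2 (0.34 * k) := by
    rw [Real.le_logb_iff_rpow_le (by norm_num) (by nlinarith)]
    calc (2:ℝ) ^ (2.38/12 : ℝ) ≤ (2:ℝ) ^ ((1:ℝ)/4) :=
          Real.rpow_le_rpow_of_exponent_le one_le_two (by norm_num)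
      _ ≤ 1.36 := by
          have h4 : ((2:ℝ) ^ ((1:ℝ)/4)) ^ (4:ℕ) ≤ (1.36:ℝ) ^ (4:ℕ) := by
            rw [← Real.rpow_natCast ((2:ℝ) ^ ((1:ℝ)/4)) 4, ← Real.rpow_mul (by norm_num)]
            norm_num
          exact le_of_pow_le_pow_left₀ (by norm_num) (by norm_num) h4
      _ ≤ 0.34 * k := by linarith
  have hlbpos : (0:ℝ) < Real.logb 2 (0.34 * k) := lt_of_lt_of_le (by norm_num) hlb
  have hfrac : 2.38 / Real.logb 2 (0.34 * k) ≤ 12 := by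
    rw [div_le_iff₀ hlbpos]
    nlinarith
  have hc24 : (24:ℝ) ≤ c := by linarith
  -- Step 2: p ≤ 2 / k^2
  have hrp : (k:ℝ) ^ (-(c/12)) ≤ (k:ℝ) ^ (-(2:ℝ)) :=
    Real.rpow_le_rpow_of_exponent_le hk1 (by linarith)
  have hk2 : (k:ℝ) ^ (-(2:ℝ)) = ((k:ℝ)^2)⁻¹ := by
    rw [Real.rpow_neg hkpos.le]
    norm_num [Real.rpow_two]
  have hksq : (0:ℝ) < (k:ℝ)^2 := by positivity
  have hp2 : p ≤ 2 / (k:ℝ)^2 := by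
    rw [hk2] at hrp
    have : 2 * (k:ℝ) ^ (-(c/12)) ≤ 2 * ((k:ℝ)^2)⁻¹ := by linarith
    calc p ≤ 2 * ((k:ℝ)^2)⁻¹ := le_trans hp this
      _ = 2 / (k:ℝ)^2 := by ring
  have h4p : 4 * p ≤ 9 / (k:ℝ)^2 := by
    rw [le_div_iff₀ hksq] at hp2 ⊢
    linarith
  -- Step 3: bound each term
  have hterm : ∀ j ∈ Finset.Icc (L+1) (2*L),
      ((2*L).choose j : ℝ) * p ^ j * (1-p)^(2*L - j) ≤ ((2*L).choose j : ℝ) * p ^ L := by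
    intro j hj
    obtain ⟨hj1, hj2⟩ := Finset.mem_Icc.mp hj
    have h1 : p ^ j ≤ p ^ L := pow_le_pow_of_le_one hp0 hp1 (by omega)
    have h2 : (1-p)^(2*L-j) ≤ 1 := pow_le_one₀ (by linarith) (by linarith)
    have hC : (0:ℝ) ≤ ((2*L).choose j : ℝ) := Nat.cast_nonneg _
    have hpj : (0:ℝ) ≤ p ^ j := pow_nonneg hp0 _
    calc ((2*L).choose j : ℝ) * p ^ j * (1-p)^(2*L - j)
        ≤ ((2*L).choose j : ℝ) * p ^ j * 1 :=
          mul_le_mul_of_nonneg_left h2 (by positivity)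
      _ = ((2*L).choose j : ℝ) * p ^ j := mul_one _
      _ ≤ ((2*L).choose j : ℝ) * p ^ L := mul_le_mul_of_nonneg_left h1 hC
  have hsum : ∑ j ∈ Finset.Icc (L+1) (2*L),
        ((2*L).choose j : ℝ) * p ^ j * (1-p)^(2*L - j)
      ≤ (∑ j ∈ Finset.Icc (L+1) (2*L), ((2*L).choose j : ℝ)) * p ^ L := by
    rw [Finset.sum_mul]
    exact Finset.sum_le_sum hterm
  -- Step 4: choose sum ≤ 4^L
  have hchoose : ∑ j ∈ Finset.Icc (L+1) (2*L), ((2*L).choose j : ℝ) ≤ (4:ℝ) ^ L := by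
    have h1 : ∑ j ∈ Finset.Icc (L+1) (2*L), (2*L).choose j
        ≤ ∑ j ∈ Finset.range (2*L+1), (2*L).choose j := by
      apply Finset.sum_le_sum_of_subset
      intro x hx
      simp only [Finset.mem_Icc, Finset.mem_range] at *
      omega
    rw [Nat.sum_range_choose] at h1
    have h2 : ((∑ j ∈ Finset.Icc (L+1) (2*L), (2*L).choose j : ℕ) : ℝ) ≤ ((2^(2*L) : ℕ) : ℝ) := by
      exact_mod_cast h1
    push_cast at h2
    calc ∑ j ∈ Finset.Icc (L+1) (2*L), ((2*L).choose j : ℝ) ≤ (2:ℝ)^(2*L) := h2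
      _ = (4:ℝ) ^ L := by rw [pow_mul]; norm_num
  -- Step 5: RHS rewrite
  have hk3 : (0:ℝ) < (k:ℝ)/3 := by positivity
  have hR : ((k:ℝ)/3) ^ (-(2*(L:ℝ))) = (9 / (k:ℝ)^2) ^ L := by
    have : ((k:ℝ)/3) ^ (-(2*(L:ℝ))) = (((k:ℝ)/3) ^ ((2*L : ℕ) : ℝ))⁻¹ := by
      rw [← Real.rpow_neg hk3.le]
      push_cast
      ring_nf
    rw [this, Real.rpow_natCast, ← inv_pow, inv_div, pow_mul]
    congr 1
    field_simp
    ring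
  -- Finish
  have hfin : (∑ j ∈ Finset.Icc (L+1) (2*L), ((2*L).choose j : ℝ)) * p ^ L
      ≤ (9 / (k:ℝ)^2) ^ L := by
    have hpL : (0:ℝ) ≤ p ^ L := pow_nonneg hp0 _
    calc (∑ j ∈ Finset.Icc (L+1) (2*L), ((2*L).choose j : ℝ)) * p ^ L
        ≤ (4:ℝ)^L * p ^ L := mul_le_mul_of_nonneg_right hchoose hpL
      _ = (4*p) ^ L := by rw [mul_pow]
      _ ≤ (9 / (k:ℝ)^2) ^ L := pow_le_pow_left₀ (by linarith) h4p L
  rw [hR]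
  exact le_trans hsum hfin
end

section
/- Let l ≥ 1 be an integer and k = 2^l. Let α be a linearly ordered type and let s : {0, …, k−2} → α be monotone (a sorted array of k−1 splitters). Define the branchless decision tree a : {1, …, k−1} → α in left-to-right breadth-first order by a(i) = s((2·(i − 2^d) + 1)·2^{l−d−1} − 1), where d = ⌊log₂ i⌋ (so a(1) = s(k/2 − 1), a(2) = s(k/4 − 1), a(3) = s(3k/4 − 1), and in general node i has children 2i and 2i+1). For an element e ∈ α define the navigation sequence i₀ = 1 and i_{m+1} = 2·i_m + (1 if a(i_m) < e, else 0). Then for every m with 0 ≤ m ≤ l one has 2^m ≤ i_m < 2^{m+1} (so in particular every access a(i_m) with m < l is within bounds), and, setting j := i_l − k, one has 0 ≤ j ≤ k−1, s(j−1) < e whenever j ≥ 1, and e ≤ s(j) whenever j ≤ k−2. Hence the decision-tree navigation classifies e into the bucket determined by s(j−1) < e ≤ s(j), with the conventions s(−1) = −∞ and s(k−1) = +∞. -/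
/-- Correctness of branchless decision-tree navigation: the navigation indices
satisfy `2^m ≤ i_m < 2^{m+1}`, and the final bucket `j = i_l − k` satisfies
`0 ≤ j ≤ k−1`, `s(j−1) < e` (if `j ≥ 1`) and `e ≤ s(j)` (if `j ≤ k−2`). -/
theorem stmt_10 {α : Type*} [LinearOrder α]
    (l : ℕ) (hl : 1 ≤ l) (k : ℕ) (hk : k = 2 ^ l)
    (s : ℕ → α) (hs : ∀ i j, i ≤ j → j ≤ k - 2 → s i ≤ s j)
    (a : ℕ → α)
    (ha : ∀ i, 1 ≤ i → i ≤ k - 1 →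
      a i = s ((2 * (i - 2 ^ Nat.log 2 i) + 1) * 2 ^ (l - Nat.log 2 i - 1) - 1))
    (e : α) (nav : ℕ → ℕ)
    (hnav0 : nav 0 = 1)
    (hnavS : ∀ m, nav (m + 1) = 2 * nav m + (if a (nav m) < e then 1 else 0)) :
    (∀ m, m ≤ l → 2 ^ m ≤ nav m ∧ nav m < 2 ^ (m + 1)) ∧
    nav l - k ≤ k - 1 ∧
    (1 ≤ nav l - k → s (nav l - k - 1) < e) ∧
    (nav l - k ≤ k - 2 → e ≤ s (nav l - k)) := by
  subst hk
  have key : ∀ m, m ≤ l → 2 ^ m ≤ nav m ∧ nav m < 2 ^ (m + 1) ∧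
      (1 ≤ nav m - 2 ^ m → s ((nav m - 2 ^ m) * 2 ^ (l - m) - 1) < e) ∧
      (nav m - 2 ^ m + 2 ≤ 2 ^ m → e ≤ s ((nav m - 2 ^ m + 1) * 2 ^ (l - m) - 1)) := by
    intro m
    induction m with
    | zero =>
      intro _
      refine ⟨by simp [hnav0], by simp [hnav0], ?_, ?_⟩ <;> simp [hnav0] <;> omega
    | succ m ih =>
      intro hm1
      have hml : m < l := hm1
      obtain ⟨h1, h2, hlow, hhigh⟩ := ih (le_of_lt hml)
      have hlog : Nat.log 2 (nav m) = m :=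
        Nat.log_eq_of_pow_le_of_lt_pow h1 h2
      have hik : nav m ≤ 2 ^ l - 1 := by
        have h3 : nav m < 2 ^ l :=
          lt_of_lt_of_le h2 (Nat.pow_le_pow_right (by norm_num) hm1)
        omega
      have ha' := ha (nav m) (le_trans Nat.one_le_two_pow h1) hik
      rw [hlog] at ha'
      set j := nav m - 2 ^ m with hj
      have hjlt : j < 2 ^ m := by omega
      have hpow : 2 ^ (l - m) = 2 * 2 ^ (l - m - 1) := by
        rw [← pow_succ']
        congr 1
        omega
      have hlm : l - (m + 1) = l - m - 1 := by omega
      have hppos : (0:ℕ) < 2 ^ (l - m - 1) := Nat.pow_pos (by norm_num)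
      rw [hnavS m]
      by_cases hb : a (nav m) < e
      · simp only [hb, if_true]
        have hnv : 2 * nav m + 1 - 2 ^ (m + 1) = 2 * j + 1 := by
          rw [pow_succ]; omega
        refine ⟨by rw [pow_succ]; omega, by rw [pow_succ]; omega, ?_, ?_⟩
        · intro _
          rw [hnv, hlm, ← ha']
          exact hb
        · intro hcond
          rw [hnv] at hcond ⊢
          have hc' : j + 2 ≤ 2 ^ m := by rw [pow_succ] at hcond; omega
          have := hhigh hc'
          have heq : (2 * j + 1 + 1) * 2 ^ (l - (m + 1)) = (j + 1) * 2 ^ (l - m) := by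
            rw [hlm, hpow]; ring
          rw [heq]
          exact this
      · simp only [hb, if_false, add_zero]
        have hnv : 2 * nav m - 2 ^ (m + 1) = 2 * j := by
          rw [pow_succ]; omega
        refine ⟨by rw [pow_succ]; omega, by rw [pow_succ]; omega, ?_, ?_⟩
        · intro hcond
          rw [hnv] at hcond ⊢
          have := hlow (by omega)
          have heq : 2 * j * 2 ^ (l - (m + 1)) = j * 2 ^ (l - m) := by
            rw [hlm, hpow]; ring
          rw [heq]
          exact this
        · intro _
          rw [hnv, hlm, ← ha']
          exact not_lt.mp hb
  obtain ⟨h1, h2, hlow, hhigh⟩ := key l le_rfl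
  have hk2 : 2 ≤ 2 ^ l := by
    calc 2 = 2 ^ 1 := rfl
    _ ≤ 2 ^ l := Nat.pow_le_pow_right (by norm_num) hl
  have hll : l - l = 0 := by omega
  rw [hll] at hlow hhigh
  simp only [pow_zero, mul_one] at hlow hhigh
  refine ⟨fun m hm => ⟨(key m hm).1, (key m hm).2.1⟩, ?_, hlow, fun h => ?_⟩
  · rw [pow_succ] at h2; omega
  · have := hhigh (by omega)
    simpa using this
end

section
/- Let l ≥ 3 be an integer, k = 2^l, let n₀ be a positive real number, and let n′ be a real number with k·n₀ < n′ < k²·n₀. Define k′ := 2^{⌈(log₂(n′/n₀)+1)/2⌉}. Then √k < k′, n′ ≤ k′²·n₀, and n₀ < n′/k′ ≤ k′·n₀. In particular, partitioning into k′ buckets keeps the number of buckets at least √k while producing buckets whose expected size again lies in the adaptive regime (n₀, k′·n₀], so that one further adaptive partitioning step yields expected base case sizes between 0.5·n₀ and n₀. -/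
/-- Adaptive bucket count `k′ = 2^{⌈(log₂(n′/n₀)+1)/2⌉}` for tasks with
`k·n₀ < n′ < k²·n₀` (where `k = 2^l`, `l ≥ 3`): then `√k < k′`, `n′ ≤ k′²·n₀`,
and `n₀ < n′/k′ ≤ k′·n₀`. -/
theorem stmt_12 (l : ℕ) (hl : 3 ≤ l) (n₀ n' : ℝ) (h₀ : 0 < n₀)
    (h₁ : (2 : ℝ) ^ l * n₀ < n') (h₂ : n' < ((2 : ℝ) ^ l) ^ 2 * n₀) :
    Real.sqrt ((2 : ℝ) ^ l) < (2 : ℝ) ^ ⌈(Real.logb 2 (n' / n₀) + 1) / 2⌉ ∧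
    n' ≤ ((2 : ℝ) ^ ⌈(Real.logb 2 (n' / n₀) + 1) / 2⌉) ^ 2 * n₀ ∧
    n₀ < n' / (2 : ℝ) ^ ⌈(Real.logb 2 (n' / n₀) + 1) / 2⌉ ∧
    n' / (2 : ℝ) ^ ⌈(Real.logb 2 (n' / n₀) + 1) / 2⌉ ≤
      (2 : ℝ) ^ ⌈(Real.logb 2 (n' / n₀) + 1) / 2⌉ * n₀ := by
  have h2 : (1:ℝ) < 2 := one_lt_two
  have hn' : 0 < n' := lt_trans (by positivity) h₁
  set x := Real.logb 2 (n' / n₀) with hxdef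
  have hratio : (2:ℝ) ^ x = n' / n₀ :=
    Real.rpow_logb two_pos (by norm_num) (by positivity)
  have hn'eq : (2:ℝ) ^ x * n₀ = n' := by
    rw [eq_div_iff h₀.ne'] at hratio; exact hratio
  have hl3 : (3:ℝ) ≤ (l:ℝ) := by exact_mod_cast hl
  have hxl : (l:ℝ) < x := by
    have hlt : (2:ℝ) ^ ((l:ℕ):ℝ) < (2:ℝ) ^ x := by
      rw [hratio, Real.rpow_natCast]
      exact (lt_div_iff₀ h₀).mpr h₁
    exact_mod_cast (Real.rpow_lt_rpow_left_iff h2).mp hlt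
  set c : ℤ := ⌈(x + 1) / 2⌉ with hcdef
  have hc1 : (x + 1) / 2 ≤ (c:ℝ) := Int.le_ceil _
  have hc2 : (c:ℝ) < (x + 1) / 2 + 1 := Int.ceil_lt_add_one _
  have hcx : (c:ℝ) < x := by linarith
  have h2c : x < 2 * (c:ℝ) := by linarith
  have hzp : (2:ℝ) ^ c = (2:ℝ) ^ ((c:ℤ):ℝ) := (Real.rpow_intCast 2 c).symm
  have hcpos : (0:ℝ) < (2:ℝ) ^ c := by rw [hzp]; positivity
  have hkey : (2:ℝ) ^ x < (2:ℝ) ^ c * (2:ℝ) ^ c := by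
    rw [hzp, ← Real.rpow_add two_pos]
    exact Real.rpow_lt_rpow_left_iff h2 |>.mpr (by linarith)
  have hclt : (2:ℝ) ^ c < (2:ℝ) ^ x := by
    rw [hzp]
    exact Real.rpow_lt_rpow_left_iff h2 |>.mpr hcx
  refine ⟨?_, ?_, ?_, ?_⟩
  · rw [show ((2:ℝ) ^ l) = (2:ℝ) ^ ((l:ℕ):ℝ) from (Real.rpow_natCast 2 l).symm,
      Real.sqrt_eq_rpow, ← Real.rpow_mul two_pos.le, hzp]
    exact Real.rpow_lt_rpow_left_iff h2 |>.mpr (by push_cast; linarith)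
  · rw [← hn'eq, sq]
    nlinarith [hkey, h₀, hcpos]
  · rw [lt_div_iff₀ hcpos, ← hn'eq]
    nlinarith [hclt, h₀]
  · rw [div_le_iff₀ hcpos, ← hn'eq]
    nlinarith [hkey, h₀, hcpos]
end
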